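/- For every positive integer n with n ≠ 2 there exists a prime number p in the interval [4n, 5n], i.e., with 4n ≤ p ≤ 5n. -/

import Mathlib

set_option maxHeartbeats 1000000

open Finset ArithmeticFunction
open scoped ArithmeticFunction

noncomputable def psi (n : ℕ) : ℝ := ∑ d ∈ Finset.Icc 1 n, Λ d

lemma cheb_identity (n : ℕ) :
    Real.log (n.factorial : ℝ) = ∑ d ∈ Finset.Icc 1 n, Λ d * ((n / d : ℕ) : ℝ) := by
  induction n with
  | zero => simp
  | succ n ih =>
    rw [Nat.factorial_succ, Nat.cast_mul, Real.log_mul (by positivity) (by positivity), ih]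
    rw [← Finset.insert_Icc_right_eq_Icc_add_one (by omega : 1 ≤ n + 1), Finset.sum_insert (by simp)]
    have hdiv : ∀ d ∈ Finset.Icc 1 n, Λ d * (((n+1) / d : ℕ) : ℝ)
        = Λ d * ((n / d : ℕ) : ℝ) + (if d ∣ n + 1 then Λ d else 0) := by
      intro d hd
      rw [Nat.succ_div]
      split_ifs <;> push_cast <;> ring
    rw [Finset.sum_congr rfl hdiv, Finset.sum_add_distrib]
    have h1 : ((n+1) / (n+1) : ℕ) = 1 := Nat.div_self (by omega)
    have h2 : ∑ d ∈ Finset.Icc 1 n, (if d ∣ n + 1 then Λ d else 0)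
        = ∑ d ∈ (n+1).divisors, Λ d - Λ (n+1) := by
      rw [Nat.divisors, ← Finset.sum_filter]
      have : Finset.filter (· ∣ n + 1) (Finset.Ico 1 (n + 1 + 1))
          = insert (n+1) (Finset.filter (· ∣ n + 1) (Finset.Icc 1 n)) := by
        ext x
        simp only [Finset.mem_filter, Finset.mem_Ico, Finset.mem_insert, Finset.mem_Icc]
        constructor
        · rintro ⟨⟨h1x, h2x⟩, h3x⟩
          rcases eq_or_lt_of_le (Nat.lt_succ_iff.1 h2x) with h | h
          · exact Or.inl h
          · exact Or.inr ⟨⟨h1x, by omega⟩, h3x⟩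
        · rintro (rfl | ⟨⟨h1x, h2x⟩, h3x⟩)
          · exact ⟨⟨by omega, by omega⟩, dvd_rfl⟩
          · exact ⟨⟨h1x, by omega⟩, h3x⟩
      rw [this, Finset.sum_insert (by simp)]
      ring
    rw [h2, vonMangoldt_sum, h1]
    push_cast
    ring

noncomputable def lfac (n : ℕ) : ℝ := Real.log (n.factorial : ℝ)

noncomputable def DD (n : ℕ) : ℝ :=
  lfac n - lfac (n/2) - lfac (n/3) - lfac (n/5) + lfac (n/30)

noncomputable def w (k : ℕ) : ℝ :=
  (k : ℝ) - (k/2 : ℕ) - (k/3 : ℕ) - (k/5 : ℕ) + (k/30 : ℕ)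

lemma w_nonneg (k : ℕ) : 0 ≤ w k := by
  have := (by omega : k/2 + k/3 + k/5 ≤ k + k/30)
  unfold w
  have : ((k/2 + k/3 + k/5 : ℕ) : ℝ) ≤ ((k + k/30 : ℕ) : ℝ) := Nat.cast_le.2 this
  push_cast at this
  linarith

lemma w_le_one (k : ℕ) : w k ≤ 1 := by
  have h := (by omega : k + k/30 ≤ k/2 + k/3 + k/5 + 1)
  unfold w
  have : ((k + k/30 : ℕ) : ℝ) ≤ ((k/2 + k/3 + k/5 + 1 : ℕ) : ℝ) := Nat.cast_le.2 h
  push_cast at this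
  linarith

lemma w_eq_one {k : ℕ} (h1 : 1 ≤ k) (h5 : k ≤ 5) : w k = 1 := by
  have h := (by omega : k + k/30 = k/2 + k/3 + k/5 + 1)
  unfold w
  have : ((k + k/30 : ℕ) : ℝ) = ((k/2 + k/3 + k/5 + 1 : ℕ) : ℝ) := by rw [h]
  push_cast at this
  linarith

lemma lfac_div_eq (n j : ℕ) (hj : 1 ≤ j) :
    lfac (n / j) = ∑ d ∈ Finset.Icc 1 n, Λ d * ((n / d / j : ℕ) : ℝ) := by
  rw [lfac, cheb_identity]
  have hcomm : ∀ d : ℕ, n / j / d = n / d / j := by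
    intro d
    rw [Nat.div_div_eq_div_mul, mul_comm, ← Nat.div_div_eq_div_mul]
  calc ∑ d ∈ Finset.Icc 1 (n/j), Λ d * ((n / j / d : ℕ) : ℝ)
      = ∑ d ∈ Finset.Icc 1 (n/j), Λ d * ((n / d / j : ℕ) : ℝ) := by
        refine Finset.sum_congr rfl fun d _ => ?_
        rw [hcomm]
    _ = ∑ d ∈ Finset.Icc 1 n, Λ d * ((n / d / j : ℕ) : ℝ) := by
        refine Finset.sum_subset (Finset.Icc_subset_Icc_right (Nat.div_le_self n j)) ?_
        intro d hd hnd
        simp only [Finset.mem_Icc] at hd hnd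
        have hlt : n / j < d := by omega
        rw [← hcomm, Nat.div_eq_of_lt hlt]
        simp

lemma DD_eq (n : ℕ) : DD n = ∑ d ∈ Finset.Icc 1 n, Λ d * w (n / d) := by
  rw [DD, lfac, cheb_identity, lfac_div_eq n 2 (by norm_num), lfac_div_eq n 3 (by norm_num),
    lfac_div_eq n 5 (by norm_num), lfac_div_eq n 30 (by norm_num)]
  rw [← Finset.sum_sub_distrib, ← Finset.sum_sub_distrib, ← Finset.sum_sub_distrib,
    ← Finset.sum_add_distrib]
  refine Finset.sum_congr rfl fun d _ => ?_
  unfold w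
  ring

lemma DD_le_psi (n : ℕ) : DD n ≤ psi n := by
  rw [DD_eq, psi]
  refine Finset.sum_le_sum fun d _ => ?_
  calc Λ d * w (n/d) ≤ Λ d * 1 := by
        exact mul_le_mul_of_nonneg_left (w_le_one _) vonMangoldt_nonneg
    _ = Λ d := mul_one _

lemma psi_sub_le_DD (n : ℕ) : psi n - psi (n / 6) ≤ DD n := by
  rw [DD_eq, psi, psi]
  have hsub : Finset.Icc 1 (n/6) ⊆ Finset.Icc 1 n :=
    Finset.Icc_subset_Icc_right (Nat.div_le_self n 6)
  rw [← Finset.sum_sdiff hsub]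
  have h1 : ∑ d ∈ Finset.Icc 1 n \ Finset.Icc 1 (n/6), Λ d
      ≤ ∑ d ∈ Finset.Icc 1 n \ Finset.Icc 1 (n/6), Λ d * w (n/d) := by
    refine Finset.sum_le_sum fun d hd => ?_
    simp only [Finset.mem_sdiff, Finset.mem_Icc] at hd
    obtain ⟨⟨hd1, hdn⟩, hd2⟩ := hd
    have hlow : 1 ≤ n / d := Nat.one_le_div_iff (by omega) |>.2 hdn
    have hhigh : n / d ≤ 5 := by
      have hdd : n / 6 < d := by omega
      have h6 : n < 6 * d := by omega
      have := (Nat.div_lt_iff_lt_mul (by omega : 0 < d)).2 (by omega : n < 6 * d)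
      omega
    rw [w_eq_one hlow hhigh, mul_one]
  have h2 : 0 ≤ ∑ d ∈ Finset.Icc 1 (n/6), Λ d * w (n/d) := by
    refine Finset.sum_nonneg fun d _ => mul_nonneg vonMangoldt_nonneg (w_nonneg _)
  have h3 : 0 ≤ ∑ d ∈ Finset.Icc 1 (n/6), Λ d := by
    refine Finset.sum_nonneg fun d _ => vonMangoldt_nonneg
  have h4 : ∑ d ∈ Finset.Icc 1 n, Λ d * w (n/d)
      = ∑ d ∈ Finset.Icc 1 n \ Finset.Icc 1 (n/6), Λ d * w (n/d)
        + ∑ d ∈ Finset.Icc 1 (n/6), Λ d * w (n/d) := (Finset.sum_sdiff hsub).symm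
  linarith

lemma lfac_lower : ∀ n : ℕ, 1 ≤ n → (n : ℝ) * Real.log n - n + 1 ≤ lfac n := by
  intro n hn
  induction n with
  | zero => omega
  | succ m ih =>
    rcases Nat.eq_or_lt_of_le hn with h | h
    · simp [lfac, ← h]
    · have hm : 1 ≤ m := by omega
      have ihm := ih hm
      have hm0 : (0:ℝ) < m := by positivity
      have hm1 : (0:ℝ) < m + 1 := by positivity
      have hfac : lfac (m+1) = lfac m + Real.log (m+1) := by
        rw [lfac, lfac, Nat.factorial_succ, Nat.cast_mul, Real.log_mul (by positivity)
          (Nat.cast_ne_zero.2 m.factorial_ne_zero), add_comm]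
        push_cast
        ring
      -- need : (m+1) log(m+1) - (m+1) + 1 ≤ lfac m + log (m+1)
      -- i.e. m * (log (m+1) - log m) ≤ 1
      have hlog : Real.log ((m+1:ℝ)) - Real.log m ≤ 1 / m := by
        rw [← Real.log_div (by positivity) (by positivity)]
        have := Real.log_le_sub_one_of_pos (show (0:ℝ) < (m+1)/m by positivity)
        have h2 : ((m:ℝ)+1)/m - 1 = 1/m := by field_simp; ring
        linarith
      have hthis := mul_le_mul_of_nonneg_left hlog (le_of_lt hm0)
      have hmm : (m:ℝ) * (1/m) = 1 := by field_simp
      rw [hmm] at hthis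
      push_cast
      push_cast at ihm
      nlinarith [ihm, hfac]

lemma lfac_upper : ∀ n : ℕ, 1 ≤ n → lfac n ≤ ((n : ℝ) + 1) * Real.log n - n + 1 := by
  intro n hn
  induction n with
  | zero => omega
  | succ m ih =>
    rcases Nat.eq_or_lt_of_le hn with h | h
    · simp [lfac, ← h]
    · have hm : 1 ≤ m := by omega
      have ihm := ih hm
      have hm0 : (0:ℝ) < m := by positivity
      have hfac : lfac (m+1) = lfac m + Real.log (m+1) := by
        rw [lfac, lfac, Nat.factorial_succ, Nat.cast_mul, Real.log_mul (by positivity)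
          (Nat.cast_ne_zero.2 m.factorial_ne_zero), add_comm]
        push_cast
        ring
      -- need: lfac m + log (m+1) ≤ (m+2) log (m+1) - (m+1) + 1
      -- from ih: lfac m ≤ (m+1) log m - m + 1; suffices (m+1) log m + 1 ≤ (m+1) log (m+1)
      -- i.e. 1 ≤ (m+1) * log((m+1)/m),  log((m+1)/m) ≥ 1/(m+1)
      have hlog : Real.log ((m+1:ℝ)) - Real.log m ≥ 1 / (m+1) := by
        rw [← Real.log_div (by positivity) (by positivity)]
        have := Real.log_le_sub_one_of_pos (show (0:ℝ) < m/(m+1) by positivity)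
        have h2 : (m:ℝ)/(m+1) - 1 = -(1/(m+1)) := by field_simp; ring
        have h3 : Real.log ((m:ℝ)/(m+1)) = - Real.log ((m+1:ℝ)/m) := by
          rw [← Real.log_inv]
          congr 1
          field_simp
        rw [Real.log_div (by positivity) (by positivity)] at h3
        have h4 : Real.log ((m:ℝ)/(m+1)) = Real.log m - Real.log ((m+1:ℝ)) :=
          Real.log_div (by positivity) (by positivity)
        linarith
      have := mul_le_mul_of_nonneg_left hlog (show (0:ℝ) ≤ m+1 by positivity)
      have hmm : ((m:ℝ)+1) * (1/(m+1)) = 1 := by field_simp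
      push_cast
      push_cast at ihm
      nlinarith [ihm, hfac]

-- tangent line bound: t log t ≥ s log s - (s-t)(log s + 1) for 1 ≤ t ≤ s
lemma tangent_bound {s t : ℝ} (ht : 1 ≤ t) (hts : t ≤ s) :
    s * Real.log s - (s - t) * (Real.log s + 1) ≤ t * Real.log t := by
  have hs : (0:ℝ) < s := by linarith
  have ht0 : (0:ℝ) < t := by linarith
  have := Real.log_le_sub_one_of_pos (show (0:ℝ) < s/t by positivity)
  rw [Real.log_div (by positivity) (by positivity)] at this
  have h2 : (s:ℝ)/t - 1 = (s - t)/t := by field_simp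
  -- t (log s - log t) ≤ s - t
  have h3 : t * (Real.log s - Real.log t) ≤ s - t := by
    have h5 := mul_le_mul_of_nonneg_left this (le_of_lt ht0)
    rw [h2] at h5
    have h4 : t * ((s-t)/t) = s - t := by field_simp
    linarith
  have hlogs : 0 ≤ Real.log s := Real.log_nonneg (by linarith)
  nlinarith

-- numeric bounds
lemma exp_gt : (2.7182818283 : ℝ) < Real.exp 1 := Real.exp_one_gt_d9
lemma exp_lt : Real.exp 1 < 2.7182818286 := by
  have := Real.exp_one_lt_d9
  linarith

lemma log2_lt : Real.log 2 < 0.7 := by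
  have h : (2:ℝ)^(10:ℕ) < Real.exp 1 ^ (7:ℕ) := by
    calc (2:ℝ)^(10:ℕ) = 1024 := by norm_num
    _ < 2.7182818283^(7:ℕ) := by norm_num
    _ < Real.exp 1 ^ (7:ℕ) := by
        apply pow_lt_pow_left₀ exp_gt (by norm_num)
        norm_num
  have h10 : (10:ℝ) * Real.log 2 = Real.log (2^(10:ℕ)) := by
    rw [Real.log_pow]; push_cast; ring
  have h7 : Real.log (Real.exp 1 ^ (7:ℕ)) = 7 := by
    rw [Real.log_pow, Real.log_exp]; norm_num
  have := Real.log_lt_log (by positivity) h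
  rw [← h10, h7] at this
  linarith

lemma log2_gt : (20/29 : ℝ) < Real.log 2 := by
  have h : Real.exp 1 ^ (20:ℕ) < (2:ℝ)^(29:ℕ) := by
    calc Real.exp 1 ^ (20:ℕ) < 2.7182818286^(20:ℕ) := by
          apply pow_lt_pow_left₀ exp_lt (by positivity)
          norm_num
    _ < (2:ℝ)^(29:ℕ) := by norm_num
  have h20 : Real.log (Real.exp 1 ^ (20:ℕ)) = 20 := by
    rw [Real.log_pow, Real.log_exp]; norm_num
  have h29 : Real.log ((2:ℝ)^(29:ℕ)) = 29 * Real.log 2 := by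
    rw [Real.log_pow]; push_cast; ring
  have := Real.log_lt_log (by positivity) h
  rw [h20, h29] at this
  linarith

lemma log3_lt : Real.log 3 < 1.1 := by
  have h : (3:ℝ)^(10:ℕ) < Real.exp 1 ^ (11:ℕ) := by
    calc (3:ℝ)^(10:ℕ) = 59049 := by norm_num
    _ < 2.7182818283^(11:ℕ) := by norm_num
    _ < Real.exp 1 ^ (11:ℕ) := by
        apply pow_lt_pow_left₀ exp_gt (by norm_num)
        norm_num
  have h10 : (10:ℝ) * Real.log 3 = Real.log (3^(10:ℕ)) := by
    rw [Real.log_pow]; push_cast; ring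
  have h11 : Real.log (Real.exp 1 ^ (11:ℕ)) = 11 := by
    rw [Real.log_pow, Real.log_exp]; norm_num
  have := Real.log_lt_log (by positivity) h
  rw [← h10, h11] at this
  linarith

lemma log3_gt : (12/11 : ℝ) < Real.log 3 := by
  have h : Real.exp 1 ^ (12:ℕ) < (3:ℝ)^(11:ℕ) := by
    calc Real.exp 1 ^ (12:ℕ) < 2.7182818286^(12:ℕ) := by
          apply pow_lt_pow_left₀ exp_lt (by positivity)
          norm_num
    _ < (3:ℝ)^(11:ℕ) := by norm_num
  have h12 : Real.log (Real.exp 1 ^ (12:ℕ)) = 12 := by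
    rw [Real.log_pow, Real.log_exp]; norm_num
  have h11 : Real.log ((3:ℝ)^(11:ℕ)) = 11 * Real.log 3 := by
    rw [Real.log_pow]; push_cast; ring
  have := Real.log_lt_log (by positivity) h
  rw [h12, h11] at this
  linarith

lemma log5_lt : Real.log 5 < (29/18 : ℝ) := by
  have h : (5:ℝ)^(18:ℕ) < Real.exp 1 ^ (29:ℕ) := by
    calc (5:ℝ)^(18:ℕ) = 3814697265625 := by norm_num
    _ < 2.7182818283^(29:ℕ) := by norm_num
    _ < Real.exp 1 ^ (29:ℕ) := by
        apply pow_lt_pow_left₀ exp_gt (by norm_num)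
        norm_num
  have h18 : (18:ℝ) * Real.log 5 = Real.log (5^(18:ℕ)) := by
    rw [Real.log_pow]; push_cast; ring
  have h29 : Real.log (Real.exp 1 ^ (29:ℕ)) = 29 := by
    rw [Real.log_pow, Real.log_exp]; norm_num
  have := Real.log_lt_log (by positivity) h
  rw [← h18, h29] at this
  linarith

lemma log5_gt : (8/5 : ℝ) < Real.log 5 := by
  have h : Real.exp 1 ^ (8:ℕ) < (5:ℝ)^(5:ℕ) := by
    calc Real.exp 1 ^ (8:ℕ) < 2.7182818286^(8:ℕ) := by
          apply pow_lt_pow_left₀ exp_lt (by positivity)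
          norm_num
    _ < (5:ℝ)^(5:ℕ) := by norm_num
  have h8 : Real.log (Real.exp 1 ^ (8:ℕ)) = 8 := by
    rw [Real.log_pow, Real.log_exp]; norm_num
  have h5 : Real.log ((5:ℝ)^(5:ℕ)) = 5 * Real.log 5 := by
    rw [Real.log_pow]; push_cast; ring
  have := Real.log_lt_log (by positivity) h
  rw [h8, h5] at this
  linarith

lemma log30 : Real.log 30 = Real.log 2 + Real.log 3 + Real.log 5 := by
  rw [show (30:ℝ) = 2*3*5 by norm_num, Real.log_mul (by norm_num) (by norm_num),
    Real.log_mul (by norm_num) (by norm_num)]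

lemma floor_div_lb (n j : ℕ) (hj : 0 < j) : (n:ℝ)/j - 1 ≤ ((n/j : ℕ) : ℝ) := by
  have h : n < j * (n/j) + j := by
    have := Nat.div_add_mod n j
    have := Nat.mod_lt n hj
    omega
  have hc : (n:ℝ) < j * ((n/j : ℕ):ℝ) + j := by exact_mod_cast Nat.cast_lt.2 h
  have hj' : (1:ℝ) ≤ j := by exact_mod_cast hj
  rw [div_sub_one (by positivity), div_le_iff₀ (by positivity : (0:ℝ) < j)]
  nlinarith

-- upper bound for lfac of a floor-quotient (used in DD_lower)
lemma lfac_floor_upper (n j : ℕ) (hj : 0 < j) (h1 : 1 ≤ n / j) :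
    lfac (n/j) ≤ ((n:ℝ)/j + 1) * (Real.log n - Real.log j) - (n:ℝ)/j + 2 := by
  set A : ℝ := ((n/j : ℕ) : ℝ) with hA
  have hA1 : (1:ℝ) ≤ A := by rw [hA]; exact_mod_cast h1
  have hAle : A ≤ (n:ℝ)/j := Nat.cast_div_le
  have hAge : (n:ℝ)/j - 1 ≤ A := floor_div_lb n j hj
  have hn0 : (0:ℝ) < n := by
    have h1n : 1 ≤ n := le_trans h1 (Nat.div_le_self n j)
    exact_mod_cast Nat.lt_of_lt_of_le Nat.zero_lt_one h1n
  have hj0 : (0:ℝ) < j := by exact_mod_cast hj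
  have hup := lfac_upper (n/j) h1
  rw [← hA] at hup
  have hlogA_le : Real.log A ≤ Real.log n - Real.log j := by
    rw [← Real.log_div (ne_of_gt hn0) (ne_of_gt hj0)]
    exact Real.log_le_log (by linarith) hAle
  have hlogA_nonneg : 0 ≤ Real.log A := Real.log_nonneg hA1
  have hprod : (A + 1) * Real.log A ≤ ((n:ℝ)/j + 1) * (Real.log n - Real.log j) := by
    apply mul_le_mul (by linarith) hlogA_le hlogA_nonneg (by positivity)
  calc lfac (n/j) ≤ (A + 1) * Real.log A - A + 1 := hup
    _ ≤ ((n:ℝ)/j + 1) * (Real.log n - Real.log j) - ((n:ℝ)/j - 1) + 1 := by linarith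
    _ = ((n:ℝ)/j + 1) * (Real.log n - Real.log j) - (n:ℝ)/j + 2 := by ring

-- lower bound for lfac of a floor-quotient (used in DD_upper and DD_lower's plus-term)
lemma lfac_floor_lower (n j : ℕ) (hj : 0 < j) (h1 : 1 ≤ n / j) (hjn : (j:ℝ) ≤ n) :
    (n:ℝ)/j * (Real.log n - Real.log j) - (Real.log n - Real.log j) - (n:ℝ)/j ≤ lfac (n/j) := by
  set A : ℝ := ((n/j : ℕ) : ℝ) with hA
  have hA1 : (1:ℝ) ≤ A := by rw [hA]; exact_mod_cast h1
  have hAle : A ≤ (n:ℝ)/j := Nat.cast_div_le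
  have hAge : (n:ℝ)/j - 1 ≤ A := floor_div_lb n j hj
  have hj0 : (0:ℝ) < j := by exact_mod_cast hj
  have hn0 : (0:ℝ) < n := lt_of_lt_of_le hj0 hjn
  have hs1 : (1:ℝ) ≤ (n:ℝ)/j := by rw [le_div_iff₀ hj0]; linarith
  have hlow := lfac_lower (n/j) h1
  rw [← hA] at hlow
  set s : ℝ := (n:ℝ)/j with hs
  have htan := tangent_bound hA1 hAle
  have hlogs : Real.log s = Real.log n - Real.log j :=
    Real.log_div (ne_of_gt hn0) (ne_of_gt hj0)
  have hlogs0 : 0 ≤ Real.log s := Real.log_nonneg hs1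
  have hsA : s - A ≤ 1 := by linarith
  have h2 : (s - A) * (Real.log s + 1) ≤ Real.log s + 1 := by
    nlinarith [hlogs0, hsA, sub_nonneg.2 hAle]
  -- A log A ≥ s log s - (log s + 1)
  have h3 : s * Real.log s - (Real.log s + 1) ≤ A * Real.log A := by linarith
  calc s * (Real.log n - Real.log j) - (Real.log n - Real.log j) - s
      = s * Real.log s - (Real.log s + 1) - s + 1 := by rw [hlogs]; ring
    _ ≤ A * Real.log A - s + 1 := by linarith
    _ ≤ A * Real.log A - A + 1 := by linarith
    _ ≤ lfac (n/j) := hlow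

lemma DD_lower {n : ℕ} (hn : 30 ≤ n) :
    0.9157 * (n:ℝ) - 4 * Real.log n - 5 ≤ DD n := by
  have hx0 : (0:ℝ) < n := by positivity
  have hx30 : (30:ℝ) ≤ n := by exact_mod_cast hn
  set x : ℝ := (n:ℝ) with hxdef
  set L : ℝ := Real.log n with hL
  set l2 : ℝ := Real.log 2 with hl2
  set l3 : ℝ := Real.log 3 with hl3
  set l5 : ℝ := Real.log 5 with hl5
  have h2 : lfac (n/2) ≤ (x/2 + 1) * (L - l2) - x/2 + 2 :=
    lfac_floor_upper n 2 (by norm_num) (by omega)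
  have h3 : lfac (n/3) ≤ (x/3 + 1) * (L - l3) - x/3 + 2 :=
    lfac_floor_upper n 3 (by norm_num) (by omega)
  have h5 : lfac (n/5) ≤ (x/5 + 1) * (L - l5) - x/5 + 2 :=
    lfac_floor_upper n 5 (by norm_num) (by omega)
  have h30 : x/30 * (L - Real.log 30) - (L - Real.log 30) - x/30 ≤ lfac (n/30) :=
    lfac_floor_lower n 30 (by norm_num) (by omega) (by exact_mod_cast (by omega : (30:ℕ) ≤ n))
  rw [log30] at h30
  have h1 : x * L - x + 1 ≤ lfac n := lfac_lower n (by omega)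
  have hE : (0.9157 : ℝ) ≤ (7/15) * l2 + (3/10) * l3 + (1/6) * l5 := by
    have := log2_gt; have := log3_gt; have := log5_gt
    rw [← hl2, ← hl3, ← hl5] at *
    linarith
  have hkey : 0.9157 * x ≤ x * ((7/15) * l2 + (3/10) * l3 + (1/6) * l5) := by
    nlinarith [hE, hx0.le]
  have hl2p : (0:ℝ) < l2 := by have := log2_gt; rw [← hl2] at this; linarith
  have hl3p : (0:ℝ) < l3 := by have := log3_gt; rw [← hl3] at this; linarith
  have hl5p : (0:ℝ) < l5 := by have := log5_gt; rw [← hl5] at this; linarith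
  rw [DD]
  nlinarith [h1, h2, h3, h5, h30, hkey, hl2p, hl3p, hl5p]

lemma DD_upper {n : ℕ} (hn : 30 ≤ n) :
    DD n ≤ 0.9252 * (n:ℝ) + 5 * Real.log n + 3 := by
  have hx0 : (0:ℝ) < n := by positivity
  have hx30 : (30:ℝ) ≤ n := by exact_mod_cast hn
  set x : ℝ := (n:ℝ) with hxdef
  set L : ℝ := Real.log n with hL
  set l2 : ℝ := Real.log 2 with hl2
  set l3 : ℝ := Real.log 3 with hl3
  set l5 : ℝ := Real.log 5 with hl5
  have h2 : x/2 * (L - l2) - (L - l2) - x/2 ≤ lfac (n/2) :=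
    lfac_floor_lower n 2 (by norm_num) (by omega) (by exact_mod_cast (by omega : (2:ℕ) ≤ n))
  have h3 : x/3 * (L - l3) - (L - l3) - x/3 ≤ lfac (n/3) :=
    lfac_floor_lower n 3 (by norm_num) (by omega) (by exact_mod_cast (by omega : (3:ℕ) ≤ n))
  have h5 : x/5 * (L - l5) - (L - l5) - x/5 ≤ lfac (n/5) :=
    lfac_floor_lower n 5 (by norm_num) (by omega) (by exact_mod_cast (by omega : (5:ℕ) ≤ n))
  have h30 : lfac (n/30) ≤ (x/30 + 1) * (L - Real.log 30) - x/30 + 2 :=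
    lfac_floor_upper n 30 (by norm_num) (by omega)
  rw [log30] at h30
  have h1 : lfac n ≤ (x + 1) * L - x + 1 := lfac_upper n (by omega)
  have hE : (1/2) * l2 + (1/3) * l3 + (1/5) * l5 - (1/30)*(l2+l3+l5) ≤ (0.9252:ℝ) := by
    have := log2_lt; have := log3_lt; have := log5_lt
    rw [← hl2, ← hl3, ← hl5] at *
    linarith
  have hkey : x * ((1/2) * l2 + (1/3) * l3 + (1/5) * l5 - (1/30)*(l2+l3+l5)) ≤ 0.9252 * x := by
    nlinarith [hE, hx0.le]
  have hl2p : (0:ℝ) < l2 := by have := log2_gt; rw [← hl2] at this; linarith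
  have hl3p : (0:ℝ) < l3 := by have := log3_gt; rw [← hl3] at this; linarith
  have hl5p : (0:ℝ) < l5 := by have := log5_gt; rw [← hl5] at this; linarith
  have hLpos : (0:ℝ) ≤ L := by
    rw [hL]; exact Real.log_nonneg (by linarith)
  rw [DD]
  nlinarith [h1, h2, h3, h5, h30, hkey, hl2p, hl3p, hl5p, hLpos]

noncomputable def theta (n : ℕ) : ℝ :=
  ∑ p ∈ (Finset.Icc 1 n).filter Nat.Prime, Real.log p

lemma theta_le (n : ℕ) : theta n ≤ 1.4 * n := by
  have h1 : (Finset.Icc 1 n).filter Nat.Prime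
      = (Finset.range (n+1)).filter Nat.Prime := by
    ext p
    simp only [Finset.mem_filter, Finset.mem_Icc, Finset.mem_range]
    constructor
    · rintro ⟨⟨ha, hb⟩, hp⟩; exact ⟨by omega, hp⟩
    · rintro ⟨ha, hp⟩; exact ⟨⟨hp.one_lt.le.trans' (by norm_num), by omega⟩, hp⟩
  have h2 : theta n = Real.log (primorial n : ℝ) := by
    rw [theta, h1, primorial, Nat.cast_prod, Real.log_prod]
    intro p hp
    simp only [Finset.mem_filter] at hp
    exact_mod_cast hp.2.pos.ne'
  rw [h2]
  have h3 : (primorial n : ℝ) ≤ ((4:ℕ) ^ n : ℝ) := by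
    exact_mod_cast primorial_le_4_pow n
  have h4 := Real.log_le_log (by exact_mod_cast (primorial_pos n)) h3
  have h5 : Real.log ((4:ℕ)^n : ℝ) = n * Real.log 4 := by
    push_cast
    rw [Real.log_pow]
  have h6 : Real.log 4 = 2 * Real.log 2 := by
    rw [show (4:ℝ) = 2^2 by norm_num, Real.log_pow]
    push_cast; ring
  have := log2_lt
  have hn : (0:ℝ) ≤ n := by positivity
  rw [h5, h6] at h4
  nlinarith

lemma psi_eq_theta_add (n : ℕ) :
    psi n = theta n + ∑ d ∈ (Finset.Icc 1 n).filter (fun d => ¬ d.Prime), Λ d := by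
  rw [psi, theta, ← Finset.sum_filter_add_sum_filter_not (Finset.Icc 1 n) Nat.Prime]
  congr 1
  refine Finset.sum_congr rfl fun p hp => ?_
  simp only [Finset.mem_filter] at hp
  exact vonMangoldt_apply_prime hp.2

lemma pp_repr {d : ℕ} (hpp : IsPrimePow d) (hnp : ¬ d.Prime) :
    ∃ p k, Nat.Prime p ∧ 2 ≤ k ∧ d = p ^ k := by
  obtain ⟨p, k, hp, hk, rfl⟩ := hpp
  have hp' : p.Prime := Nat.prime_iff.mpr hp
  refine ⟨p, k, hp', ?_, rfl⟩
  by_contra hk2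
  have : k = 1 := by omega
  rw [this, pow_one] at hnp
  exact hnp hp'

lemma odd_pp_repr {d : ℕ} (hpp : IsPrimePow d) (hnp : ¬ d.Prime) (hns : ¬ IsSquare d) :
    ∃ p j, Nat.Prime p ∧ 1 ≤ j ∧ d = p ^ (2*j+1) := by
  obtain ⟨p, k, hp', hk2, rfl⟩ := pp_repr hpp hnp
  rcases Nat.even_or_odd k with he | ho
  · exfalso
    obtain ⟨j, rfl⟩ := he
    exact hns ⟨p^j, by rw [← pow_add]⟩
  · obtain ⟨j, rfl⟩ := ho
    exact ⟨p, j, hp', by omega, rfl⟩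

lemma sqrt_pow_repr {p j : ℕ} (hp : p.Prime) (hj : 1 ≤ j) :
    Nat.sqrt (p^(2*j+1) / (p^(2*j+1)).minFac) = p ^ j ∧ (p^j).minFac = p := by
  have hmf1 : (p^(2*j+1)).minFac = p := by
    rw [Nat.pow_minFac (by omega), hp.minFac_eq]
  have hmf2 : (p^j).minFac = p := by
    rw [Nat.pow_minFac (by omega), hp.minFac_eq]
  constructor
  · rw [hmf1]
    have hdiv : p^(2*j+1) / p = p^(2*j) := by
      rw [pow_succ, Nat.mul_div_cancel _ hp.pos]
    rw [hdiv, two_mul, pow_add, Nat.sqrt_eq]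
  · exact hmf2

lemma card_pp (n : ℕ) :
    ((Finset.Icc 1 n).filter (fun d => IsPrimePow d ∧ ¬ d.Prime)).card
      ≤ 2 * Nat.sqrt n := by
  set T := (Finset.Icc 1 n).filter (fun d => IsPrimePow d ∧ ¬ d.Prime) with hT
  have hcard1 : (T.filter (fun d => IsSquare d)).card ≤ (Finset.Icc 1 (Nat.sqrt n)).card := by
    apply Finset.card_le_card_of_injOn (fun d => Nat.sqrt d)
    · intro d hd
      simp only [hT, Finset.mem_filter, Finset.mem_Icc, Finset.mem_coe] at hd
      obtain ⟨⟨⟨hd1, hdn⟩, _, _⟩, _⟩ := hd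
      simp only [Finset.mem_Icc, Finset.mem_coe]
      constructor
      · rw [Nat.one_le_iff_ne_zero]
        intro h0
        rw [Nat.sqrt_eq_zero] at h0
        omega
      · exact Nat.sqrt_le_sqrt hdn
    · intro d hd d' hd' heq
      simp only [hT, Finset.mem_filter, Finset.mem_Icc, Finset.mem_coe] at hd hd'
      obtain ⟨_, hsq⟩ := hd
      obtain ⟨_, hsq'⟩ := hd'
      obtain ⟨r, rfl⟩ := hsq
      obtain ⟨r', rfl⟩ := hsq'
      simp only [Nat.sqrt_eq] at heq
      rw [heq]
  have hcard2 : (T.filter (fun d => ¬ IsSquare d)).card ≤ (Finset.Icc 1 (Nat.sqrt n)).card := by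
    apply Finset.card_le_card_of_injOn (fun d => Nat.sqrt (d / d.minFac))
    · intro d hd
      simp only [hT, Finset.mem_filter, Finset.mem_Icc, Finset.mem_coe] at hd
      obtain ⟨⟨⟨hd1, hdn⟩, hpp, hnp⟩, hns⟩ := hd
      obtain ⟨p, j, hp, hj, rfl⟩ := odd_pp_repr hpp hnp hns
      obtain ⟨hs, _⟩ := sqrt_pow_repr hp hj
      beta_reduce
      rw [hs]
      simp only [Finset.mem_Icc, Finset.mem_coe]
      constructor
      · exact Nat.one_le_pow _ _ hp.pos
      · rw [Nat.le_sqrt]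
        calc p^j * p^j = p^(2*j) := by rw [two_mul, pow_add]
          _ ≤ p^(2*j+1) := Nat.pow_le_pow_right hp.pos (by omega)
          _ ≤ n := hdn
    · intro d hd d' hd' heq
      simp only [hT, Finset.mem_filter, Finset.mem_Icc, Finset.mem_coe] at hd hd'
      obtain ⟨⟨_, hpp, hnp⟩, hns⟩ := hd
      obtain ⟨⟨_, hpp', hnp'⟩, hns'⟩ := hd'
      obtain ⟨p, j, hp, hj, rfl⟩ := odd_pp_repr hpp hnp hns
      obtain ⟨p', j', hp', hj', rfl⟩ := odd_pp_repr hpp' hnp' hns'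
      obtain ⟨hs, hmf⟩ := sqrt_pow_repr hp hj
      obtain ⟨hs', hmf'⟩ := sqrt_pow_repr hp' hj'
      simp only at heq
      rw [hs, hs'] at heq
      have h1 : p^(2*j+1) = (p^j).minFac * (p^j)^2 := by
        rw [hmf, ← pow_mul, pow_succ']
        ring_nf
      have h2 : p'^(2*j'+1) = (p'^j').minFac * (p'^j')^2 := by
        rw [hmf', ← pow_mul, pow_succ']
        ring_nf
      rw [h1, h2, heq]
  have hunion : T = T.filter (fun d => IsSquare d) ∪ T.filter (fun d => ¬ IsSquare d) :=
    (Finset.filter_union_filter_not_eq _ T).symm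
  calc T.card ≤ (T.filter (fun d => IsSquare d)).card
        + (T.filter (fun d => ¬ IsSquare d)).card := by
        rw [hunion]
        exact (Finset.card_union_le _ _).trans (by rw [← hunion])
    _ ≤ 2 * Nat.sqrt n := by
        have := Nat.card_Icc 1 (Nat.sqrt n)
        omega

lemma surplus_le (n : ℕ) (hn : 1 ≤ n) :
    ∑ d ∈ (Finset.Icc 1 n).filter (fun d => ¬ d.Prime), Λ d
      ≤ Real.sqrt n * Real.log n := by
  set S := (Finset.Icc 1 n).filter (fun d => ¬ d.Prime) with hS
  set T := (Finset.Icc 1 n).filter (fun d => IsPrimePow d ∧ ¬ d.Prime) with hT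
  have hsub : T ⊆ S := by
    intro d hd
    simp only [hT, hS, Finset.mem_filter] at hd ⊢
    exact ⟨hd.1, hd.2.2⟩
  have heq : ∑ d ∈ S, Λ d = ∑ d ∈ T, Λ d := by
    symm
    apply Finset.sum_subset hsub
    intro d hdS hdT
    simp only [hS, hT, Finset.mem_filter] at hdS hdT
    rw [vonMangoldt_eq_zero_iff]
    intro hpp
    exact hdT ⟨hdS.1, hpp, hdS.2⟩
  rw [heq]
  have hlogn : (0:ℝ) ≤ Real.log n := Real.log_nonneg (by exact_mod_cast hn)
  have hbound : ∀ d ∈ T, Λ d ≤ Real.log n / 2 := by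
    intro d hd
    simp only [hT, Finset.mem_filter, Finset.mem_Icc] at hd
    obtain ⟨⟨hd1, hdn⟩, hpp, hnp⟩ := hd
    obtain ⟨p, k, hp, hk, rfl⟩ := pp_repr hpp hnp
    have hmf : (p^k).minFac = p := by
      rw [Nat.pow_minFac (by omega), hp.minFac_eq]
    rw [vonMangoldt_apply, if_pos hpp, hmf]
    have hp2n : p^2 ≤ n := le_trans (Nat.pow_le_pow_right hp.pos hk) hdn
    have hcast : ((p:ℝ))^2 ≤ (n:ℝ) := by exact_mod_cast hp2n
    have hlog : Real.log ((p:ℝ)^2) ≤ Real.log n := by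
      have hp0 : (0:ℝ) < p := by exact_mod_cast hp.pos
      apply Real.log_le_log (by positivity) hcast
    rw [Real.log_pow] at hlog
    push_cast at hlog
    linarith
  calc ∑ d ∈ T, Λ d ≤ T.card • (Real.log n / 2) := Finset.sum_le_card_nsmul T _ _ hbound
    _ = (T.card : ℝ) * (Real.log n / 2) := by rw [nsmul_eq_mul]
    _ ≤ (2 * Nat.sqrt n : ℝ) * (Real.log n / 2) := by
        apply mul_le_mul_of_nonneg_right _ (by linarith)
        exact_mod_cast card_pp n
    _ = (Nat.sqrt n : ℝ) * Real.log n := by ring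
    _ ≤ Real.sqrt n * Real.log n := by
        apply mul_le_mul_of_nonneg_right _ hlogn
        exact Real.nat_sqrt_le_real_sqrt

lemma analytic_case (m : ℕ) (hm : 4000000 ≤ m) :
    ∃ p, p.Prime ∧ 4*m ≤ p ∧ p ≤ 5*m := by
  by_contra hcon
  push_neg at hcon
  -- every number in (4m, 5m] is not prime
  have hnp : ∀ d ∈ Finset.Ioc (4*m) (5*m), ¬ d.Prime := by
    intro d hd hdp
    simp only [Finset.mem_Ioc] at hd
    have := hcon d hdp (by omega)
    omega
  set x : ℝ := (m:ℝ) with hx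
  have hx4 : (4000000:ℝ) ≤ x := by rw [hx]; exact_mod_cast hm
  have hx0 : (0:ℝ) < x := by linarith
  set L : ℝ := Real.log (5*x) with hLdef
  -- interval sum
  have hsplit : psi (5*m) = psi (4*m) + ∑ d ∈ Finset.Ioc (4*m) (5*m), Λ d := by
    rw [psi, psi, show Finset.Icc 1 (5*m) = Finset.Ioc 0 (5*m) by ext; simp; omega,
      show Finset.Icc 1 (4*m) = Finset.Ioc 0 (4*m) by ext; simp; omega]
    exact (Finset.sum_Ioc_consecutive _ (by omega) (by omega)).symm
  -- cast lemmas
  have hc5 : ((5*m : ℕ) : ℝ) = 5*x := by push_cast; ring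
  have hc4 : ((4*m : ℕ) : ℝ) = 4*x := by push_cast; ring
  have hL5 : Real.log ((5*m : ℕ) : ℝ) = L := by rw [hc5]
  -- interval sum bounded by surplus
  have hIoc : ∑ d ∈ Finset.Ioc (4*m) (5*m), Λ d ≤ Real.sqrt (5*x) * L := by
    have hsub : Finset.Ioc (4*m) (5*m)
        ⊆ (Finset.Icc 1 (5*m)).filter (fun d => ¬ d.Prime) := by
      intro d hd
      simp only [Finset.mem_Ioc] at hd
      simp only [Finset.mem_filter, Finset.mem_Icc]
      exact ⟨⟨by omega, hd.2⟩, hnp d (by simp only [Finset.mem_Ioc]; omega)⟩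
    calc ∑ d ∈ Finset.Ioc (4*m) (5*m), Λ d
        ≤ ∑ d ∈ (Finset.Icc 1 (5*m)).filter (fun d => ¬ d.Prime), Λ d :=
          Finset.sum_le_sum_of_subset_of_nonneg hsub (fun _ _ _ => vonMangoldt_nonneg)
      _ ≤ Real.sqrt ((5*m:ℕ)) * Real.log ((5*m:ℕ)) := surplus_le (5*m) (by omega)
      _ = Real.sqrt (5*x) * L := by rw [hc5, hLdef]
  -- lower bound on psi (5m)
  have hlow : 0.9157 * (5*x) - 4*L - 5 ≤ psi (5*m) := by
    have h1 := DD_lower (n := 5*m) (by omega)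
    have h2 := DD_le_psi (5*m)
    rw [hc5] at h1
    rw [hLdef]
    linarith
  -- upper bound on psi (4m)
  set n6 : ℕ := 4*m/6 with hn6
  set n36 : ℕ := n6/6 with hn36
  have hup1 : psi (4*m) ≤ DD (4*m) + DD n6 + psi n36 := by
    have h1 := psi_sub_le_DD (4*m)
    have h2 := psi_sub_le_DD n6
    rw [← hn6] at h1
    rw [← hn36] at h2
    linarith
  have hlog4 : Real.log ((4*m:ℕ):ℝ) ≤ L := by
    rw [hc4, hLdef]
    apply Real.log_le_log (by linarith)
    linarith
  have hn6cast : ((n6:ℕ):ℝ) ≤ 2/3 * x := by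
    have h1 : ((n6:ℕ):ℝ) ≤ ((4*m:ℕ):ℝ)/6 := Nat.cast_div_le
    rw [hc4] at h1
    linarith
  have hn6pos : (0:ℝ) < ((n6:ℕ):ℝ) := by
    have : (1:ℕ) ≤ n6 := by omega
    exact_mod_cast Nat.lt_of_lt_of_le Nat.zero_lt_one this
  have hlog6 : Real.log ((n6:ℕ):ℝ) ≤ L := by
    rw [hLdef]
    apply Real.log_le_log hn6pos
    linarith
  have hDD4 : DD (4*m) ≤ 0.9252 * (4*x) + 5*L + 3 := by
    have h := DD_upper (n := 4*m) (by omega)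
    linarith [h, hlog4, hc4.le, hc4.ge]
  have hDD6 : DD n6 ≤ 0.9252 * (2/3*x) + 5*L + 3 := by
    have h := DD_upper (n := n6) (by omega)
    linarith [h, hn6cast, hlog6]
  -- psi n36
  have hn36cast : ((n36:ℕ):ℝ) ≤ x/9 := by
    have heq9 : n36 = m/9 := by omega
    have h1 : ((m/9:ℕ):ℝ) ≤ x/9 := Nat.cast_div_le
    rw [heq9]
    exact h1
  have hn36pos : (0:ℝ) < ((n36:ℕ):ℝ) := by
    have : (1:ℕ) ≤ n36 := by omega
    exact_mod_cast Nat.lt_of_lt_of_le Nat.zero_lt_one this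
  have hlog36 : Real.log ((n36:ℕ):ℝ) ≤ L := by
    rw [hLdef]
    apply Real.log_le_log hn36pos
    linarith
  have hlogL0 : 0 ≤ L := by
    rw [hLdef]; exact Real.log_nonneg (by linarith)
  have hsq36 : Real.sqrt ((n36:ℕ):ℝ) ≤ Real.sqrt x / 3 := by
    calc Real.sqrt ((n36:ℕ):ℝ) ≤ Real.sqrt (x/9) := Real.sqrt_le_sqrt hn36cast
      _ = Real.sqrt x / 3 := by
          rw [Real.sqrt_div hx0.le, show Real.sqrt 9 = 3 by
            rw [show (9:ℝ) = 3^2 by norm_num, Real.sqrt_sq (by norm_num)]]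
  have hlog36nn : 0 ≤ Real.log ((n36:ℕ):ℝ) := by
    apply Real.log_nonneg
    have : (1:ℕ) ≤ n36 := by omega
    exact_mod_cast this
  have hpsi36 : psi n36 ≤ 1.4 * (x/9) + (Real.sqrt x / 3) * L := by
    have h1 := psi_eq_theta_add n36
    have h2 := theta_le n36
    have h3 := surplus_le n36 (by omega)
    have h4 : Real.sqrt ((n36:ℕ):ℝ) * Real.log ((n36:ℕ):ℝ) ≤ (Real.sqrt x / 3) * L := by
      apply mul_le_mul hsq36 hlog36 hlog36nn (by positivity)
    have h5 : (1.4:ℝ) * ((n36:ℕ):ℝ) ≤ 1.4 * (x/9) := by linarith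
    linarith
  -- now the master inequality
  have hsqx : Real.sqrt x ≤ Real.sqrt (5*x) := Real.sqrt_le_sqrt (by linarith)
  have master : 0.9157 * (5*x) - 4*L - 5
      ≤ 0.9252*(4*x) + 0.9252*(2/3*x) + 1.4*(x/9) + 14*L + 6
        + (Real.sqrt (5*x) + Real.sqrt x / 3) * L := by
    have hexp : (Real.sqrt (5*x) + Real.sqrt x / 3) * L
        = Real.sqrt (5*x) * L + (Real.sqrt x / 3) * L := by ring
    linarith [hlow, hsplit.le, hsplit.ge, hup1, hDD4, hDD6, hpsi36, hIoc, hexp.le, hexp.ge]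
  -- simplified master inequality
  have master2 : 0.105 * x ≤ 18*L + 11 + (Real.sqrt (5*x) + Real.sqrt x / 3) * L := by
    linarith [master, hx0.le]
  -- substitute u = (5x)^(1/16)
  set u : ℝ := Real.sqrt (Real.sqrt (Real.sqrt (Real.sqrt (5*x)))) with hu
  have h5x0 : (0:ℝ) ≤ 5*x := by linarith
  have h1' : (0:ℝ) ≤ Real.sqrt (5*x) := Real.sqrt_nonneg _
  have h2' : (0:ℝ) ≤ Real.sqrt (Real.sqrt (5*x)) := Real.sqrt_nonneg _
  have h3' : (0:ℝ) ≤ Real.sqrt (Real.sqrt (Real.sqrt (5*x))) := Real.sqrt_nonneg _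
  have hu0 : (0:ℝ) ≤ u := Real.sqrt_nonneg _
  have e3 : u^2 = Real.sqrt (Real.sqrt (Real.sqrt (5*x))) := Real.sq_sqrt h3'
  have e2 : (Real.sqrt (Real.sqrt (Real.sqrt (5*x))))^2 = Real.sqrt (Real.sqrt (5*x)) :=
    Real.sq_sqrt h2'
  have e1 : (Real.sqrt (Real.sqrt (5*x)))^2 = Real.sqrt (5*x) := Real.sq_sqrt h1'
  have e0 : (Real.sqrt (5*x))^2 = 5*x := Real.sq_sqrt h5x0
  have hu8 : u^8 = Real.sqrt (5*x) := by
    calc u^8 = ((u^2)^2)^2 := by ring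
      _ = Real.sqrt (5*x) := by rw [e3, e2, e1]
  have hu16 : u^16 = 5*x := by
    calc u^16 = (((u^2)^2)^2)^2 := by ring
      _ = 5*x := by rw [e3, e2, e1, e0]
  have hupos : (0:ℝ) < u := by
    rcases eq_or_lt_of_le hu0 with h | h
    · exfalso
      have h0 : (0:ℝ)^16 = 5*x := by rw [h]; exact hu16
      simp at h0
      linarith
    · exact h
  have hLeq : L = 16 * Real.log u := by
    rw [hLdef, ← hu16, Real.log_pow]
    push_cast
    ring
  have hLle : L ≤ 16*u - 16 := by
    have := Real.log_le_sub_one_of_pos hupos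
    rw [hLeq]
    linarith
  have hu_ge : (2.85:ℝ) ≤ u := by
    by_contra hlt
    push_neg at hlt
    have h1 : u^16 < 2.85^16 := by
      apply pow_lt_pow_left₀ hlt hu0
      norm_num
    have h2 : (2.85:ℝ)^16 < 20000000 := by norm_num
    rw [hu16] at h1
    linarith
  -- bound the sqrt-L product
  have hterm : (Real.sqrt (5*x) + Real.sqrt x / 3) * L ≤ (64/3)*u^9 - (64/3)*u^8 := by
    have hb1 : Real.sqrt (5*x) + Real.sqrt x / 3 ≤ (4/3)*u^8 := by
      rw [← hu8] at hsqx ⊢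
      linarith
    have hb2 : (Real.sqrt (5*x) + Real.sqrt x / 3) * L ≤ ((4/3)*u^8) * L :=
      mul_le_mul_of_nonneg_right hb1 hlogL0
    have hb3 : ((4/3)*u^8) * L ≤ ((4/3)*u^8) * (16*u-16) :=
      mul_le_mul_of_nonneg_left hLle (by positivity)
    calc (Real.sqrt (5*x) + Real.sqrt x / 3) * L ≤ ((4/3)*u^8) * L := hb2
      _ ≤ ((4/3)*u^8) * (16*u-16) := hb3
      _ = (64/3)*u^9 - (64/3)*u^8 := by ring
  -- final contradiction, everything in u
  have hxu : 0.105 * x = 0.021 * u^16 := by rw [hu16]; ring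
  have hfin : 0.021 * u^16 ≤ 288*u - 277 + (64/3)*u^9 - (64/3)*u^8 := by
    rw [← hxu]
    calc 0.105 * x ≤ 18*L + 11 + (Real.sqrt (5*x) + Real.sqrt x / 3) * L := master2
      _ ≤ 18*(16*u-16) + 11 + ((64/3)*u^9 - (64/3)*u^8) := by linarith [hterm, hLle]
      _ = 288*u - 277 + (64/3)*u^9 - (64/3)*u^8 := by ring
  have h7 : (2.85:ℝ)^7 ≤ u^7 := pow_le_pow_left₀ (by norm_num) hu_ge 7
  have h8 : (2.85:ℝ)^8 ≤ u^8 := pow_le_pow_left₀ (by norm_num) hu_ge 8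
  have h9nn : (0:ℝ) ≤ u^9 := by positivity
  have key1 : 32*u^9 ≤ 0.021*u^16 := by
    have hc : (32:ℝ) ≤ 0.021 * u^7 := by linarith [h7]
    have hmul := mul_le_mul_of_nonneg_right hc h9nn
    calc 32*u^9 ≤ (0.021*u^7)*u^9 := hmul
      _ = 0.021*u^16 := by ring
  have key2 : 288*u + 11 ≤ (32 - 64/3)*u^9 := by
    have hc : (2.85:ℝ)^8 * u ≤ u^9 := by
      have hmul := mul_le_mul_of_nonneg_right h8 hu0
      calc (2.85:ℝ)^8 * u ≤ u^8*u := hmul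
        _ = u^9 := by ring
    linarith [hc, hu_ge]
  have hu8nn : (0:ℝ) ≤ u^8 := by positivity
  linarith [hfin, key1, key2, hu8nn]

def Good (n : ℕ) : Prop := ∃ p, p.Prime ∧ 4*n ≤ p ∧ p ≤ 5*n

lemma chain_step {N : ℕ} (q : ℕ) (hq : q.Prime) (hqN : q ≤ 5*N)
    (H : ∀ n, 3 ≤ n → n < N → Good n) :
    ∀ n, 3 ≤ n → n < q/4 + 1 → Good n := by
  intro n h3 hn
  by_cases hN : n < N
  · exact H n h3 hN
  · push_neg at hN
    exact ⟨q, hq, by omega, le_trans hqN (by omega)⟩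

lemma chain0 : ∀ n : ℕ, 3 ≤ n → n < 4 → Good n := by
  intro n h3 h4
  have : n = 3 := by omega
  subst this
  exact ⟨13, by norm_num, by omega, by omega⟩

lemma chain1 : ∀ n : ℕ, 3 ≤ n → n < 5 → Good n := by
  have h := chain_step 19 (by norm_num) (by norm_num) chain0
  intro n h3 hn
  exact h n h3 (by omega)

lemma chain2 : ∀ n : ℕ, 3 ≤ n → n < 6 → Good n := by
  have h := chain_step 23 (by norm_num) (by norm_num) chain1
  intro n h3 hn
  exact h n h3 (by omega)

lemma chain3 : ∀ n : ℕ, 3 ≤ n → n < 8 → Good n := by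
  have h := chain_step 29 (by norm_num) (by norm_num) chain2
  intro n h3 hn
  exact h n h3 (by omega)

lemma chain4 : ∀ n : ℕ, 3 ≤ n → n < 10 → Good n := by
  have h := chain_step 37 (by norm_num) (by norm_num) chain3
  intro n h3 hn
  exact h n h3 (by omega)

lemma chain5 : ∀ n : ℕ, 3 ≤ n → n < 12 → Good n := by
  have h := chain_step 47 (by norm_num) (by norm_num) chain4
  intro n h3 hn
  exact h n h3 (by omega)

lemma chain6 : ∀ n : ℕ, 3 ≤ n → n < 15 → Good n := by
  have h := chain_step 59 (by norm_num) (by norm_num) chain5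
  intro n h3 hn
  exact h n h3 (by omega)

lemma chain7 : ∀ n : ℕ, 3 ≤ n → n < 19 → Good n := by
  have h := chain_step 73 (by norm_num) (by norm_num) chain6
  intro n h3 hn
  exact h n h3 (by omega)

lemma chain8 : ∀ n : ℕ, 3 ≤ n → n < 23 → Good n := by
  have h := chain_step 89 (by norm_num) (by norm_num) chain7
  intro n h3 hn
  exact h n h3 (by omega)

lemma chain9 : ∀ n : ℕ, 3 ≤ n → n < 29 → Good n := by
  have h := chain_step 113 (by norm_num) (by norm_num) chain8
  intro n h3 hn
  exact h n h3 (by omega)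

lemma chain10 : ∀ n : ℕ, 3 ≤ n → n < 35 → Good n := by
  have h := chain_step 139 (by norm_num) (by norm_num) chain9
  intro n h3 hn
  exact h n h3 (by omega)

lemma chain11 : ∀ n : ℕ, 3 ≤ n → n < 44 → Good n := by
  have h := chain_step 173 (by norm_num) (by norm_num) chain10
  intro n h3 hn
  exact h n h3 (by omega)

lemma chain12 : ∀ n : ℕ, 3 ≤ n → n < 53 → Good n := by
  have h := chain_step 211 (by norm_num) (by norm_num) chain11
  intro n h3 hn
  exact h n h3 (by omega)

lemma chain13 : ∀ n : ℕ, 3 ≤ n → n < 66 → Good n := by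
  have h := chain_step 263 (by norm_num) (by norm_num) chain12
  intro n h3 hn
  exact h n h3 (by omega)

lemma chain14 : ∀ n : ℕ, 3 ≤ n → n < 80 → Good n := by
  have h := chain_step 317 (by norm_num) (by norm_num) chain13
  intro n h3 hn
  exact h n h3 (by omega)

lemma chain15 : ∀ n : ℕ, 3 ≤ n → n < 100 → Good n := by
  have h := chain_step 397 (by norm_num) (by norm_num) chain14
  intro n h3 hn
  exact h n h3 (by omega)

lemma chain16 : ∀ n : ℕ, 3 ≤ n → n < 125 → Good n := by
  have h := chain_step 499 (by norm_num) (by norm_num) chain15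
  intro n h3 hn
  exact h n h3 (by omega)

lemma chain17 : ∀ n : ℕ, 3 ≤ n → n < 155 → Good n := by
  have h := chain_step 619 (by norm_num) (by norm_num) chain16
  intro n h3 hn
  exact h n h3 (by omega)

lemma chain18 : ∀ n : ℕ, 3 ≤ n → n < 194 → Good n := by
  have h := chain_step 773 (by norm_num) (by norm_num) chain17
  intro n h3 hn
  exact h n h3 (by omega)

lemma chain19 : ∀ n : ℕ, 3 ≤ n → n < 242 → Good n := by
  have h := chain_step 967 (by norm_num) (by norm_num) chain18
  intro n h3 hn
  exact h n h3 (by omega)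

lemma chain20 : ∀ n : ℕ, 3 ≤ n → n < 301 → Good n := by
  have h := chain_step 1201 (by norm_num) (by norm_num) chain19
  intro n h3 hn
  exact h n h3 (by omega)

lemma chain21 : ∀ n : ℕ, 3 ≤ n → n < 375 → Good n := by
  have h := chain_step 1499 (by norm_num) (by norm_num) chain20
  intro n h3 hn
  exact h n h3 (by omega)

lemma chain22 : ∀ n : ℕ, 3 ≤ n → n < 469 → Good n := by
  have h := chain_step 1873 (by norm_num) (by norm_num) chain21
  intro n h3 hn
  exact h n h3 (by omega)

lemma chain23 : ∀ n : ℕ, 3 ≤ n → n < 586 → Good n := by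
  have h := chain_step 2341 (by norm_num) (by norm_num) chain22
  intro n h3 hn
  exact h n h3 (by omega)

lemma chain24 : ∀ n : ℕ, 3 ≤ n → n < 732 → Good n := by
  have h := chain_step 2927 (by norm_num) (by norm_num) chain23
  intro n h3 hn
  exact h n h3 (by omega)

lemma chain25 : ∀ n : ℕ, 3 ≤ n → n < 915 → Good n := by
  have h := chain_step 3659 (by norm_num) (by norm_num) chain24
  intro n h3 hn
  exact h n h3 (by omega)

lemma chain26 : ∀ n : ℕ, 3 ≤ n → n < 1142 → Good n := by
  have h := chain_step 4567 (by norm_num) (by norm_num) chain25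
  intro n h3 hn
  exact h n h3 (by omega)

lemma chain27 : ∀ n : ℕ, 3 ≤ n → n < 1426 → Good n := by
  have h := chain_step 5701 (by norm_num) (by norm_num) chain26
  intro n h3 hn
  exact h n h3 (by omega)

lemma chain28 : ∀ n : ℕ, 3 ≤ n → n < 1783 → Good n := by
  have h := chain_step 7129 (by norm_num) (by norm_num) chain27
  intro n h3 hn
  exact h n h3 (by omega)

lemma chain29 : ∀ n : ℕ, 3 ≤ n → n < 2224 → Good n := by
  have h := chain_step 8893 (by norm_num) (by norm_num) chain28
  intro n h3 hn
  exact h n h3 (by omega)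

lemma chain30 : ∀ n : ℕ, 3 ≤ n → n < 2780 → Good n := by
  have h := chain_step 11119 (by norm_num) (by norm_num) chain29
  intro n h3 hn
  exact h n h3 (by omega)

lemma chain31 : ∀ n : ℕ, 3 ≤ n → n < 3471 → Good n := by
  have h := chain_step 13883 (by norm_num) (by norm_num) chain30
  intro n h3 hn
  exact h n h3 (by omega)

lemma chain32 : ∀ n : ℕ, 3 ≤ n → n < 4338 → Good n := by
  have h := chain_step 17351 (by norm_num) (by norm_num) chain31
  intro n h3 hn
  exact h n h3 (by omega)

lemma chain33 : ∀ n : ℕ, 3 ≤ n → n < 5421 → Good n := by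
  have h := chain_step 21683 (by norm_num) (by norm_num) chain32
  intro n h3 hn
  exact h n h3 (by omega)

lemma chain34 : ∀ n : ℕ, 3 ≤ n → n < 6776 → Good n := by
  have h := chain_step 27103 (by norm_num) (by norm_num) chain33
  intro n h3 hn
  exact h n h3 (by omega)

lemma chain35 : ∀ n : ℕ, 3 ≤ n → n < 8468 → Good n := by
  have h := chain_step 33871 (by norm_num) (by norm_num) chain34
  intro n h3 hn
  exact h n h3 (by omega)

lemma chain36 : ∀ n : ℕ, 3 ≤ n → n < 10585 → Good n := by
  have h := chain_step 42337 (by norm_num) (by norm_num) chain35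
  intro n h3 hn
  exact h n h3 (by omega)

lemma chain37 : ∀ n : ℕ, 3 ≤ n → n < 13230 → Good n := by
  have h := chain_step 52919 (by norm_num) (by norm_num) chain36
  intro n h3 hn
  exact h n h3 (by omega)

lemma chain38 : ∀ n : ℕ, 3 ≤ n → n < 16535 → Good n := by
  have h := chain_step 66137 (by norm_num) (by norm_num) chain37
  intro n h3 hn
  exact h n h3 (by omega)

lemma chain39 : ∀ n : ℕ, 3 ≤ n → n < 20665 → Good n := by
  have h := chain_step 82657 (by norm_num) (by norm_num) chain38
  intro n h3 hn
  exact h n h3 (by omega)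

lemma chain40 : ∀ n : ℕ, 3 ≤ n → n < 25830 → Good n := by
  have h := chain_step 103319 (by norm_num) (by norm_num) chain39
  intro n h3 hn
  exact h n h3 (by omega)

lemma chain41 : ∀ n : ℕ, 3 ≤ n → n < 32282 → Good n := by
  have h := chain_step 129127 (by norm_num) (by norm_num) chain40
  intro n h3 hn
  exact h n h3 (by omega)

lemma chain42 : ∀ n : ℕ, 3 ≤ n → n < 40352 → Good n := by
  have h := chain_step 161407 (by norm_num) (by norm_num) chain41
  intro n h3 hn
  exact h n h3 (by omega)

lemma chain43 : ∀ n : ℕ, 3 ≤ n → n < 50440 → Good n := by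
  have h := chain_step 201757 (by norm_num) (by norm_num) chain42
  intro n h3 hn
  exact h n h3 (by omega)

lemma chain44 : ∀ n : ℕ, 3 ≤ n → n < 63049 → Good n := by
  have h := chain_step 252193 (by norm_num) (by norm_num) chain43
  intro n h3 hn
  exact h n h3 (by omega)

lemma chain45 : ∀ n : ℕ, 3 ≤ n → n < 78806 → Good n := by
  have h := chain_step 315223 (by norm_num) (by norm_num) chain44
  intro n h3 hn
  exact h n h3 (by omega)

lemma chain46 : ∀ n : ℕ, 3 ≤ n → n < 98505 → Good n := by
  have h := chain_step 394019 (by norm_num) (by norm_num) chain45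
  intro n h3 hn
  exact h n h3 (by omega)

lemma chain47 : ∀ n : ℕ, 3 ≤ n → n < 123131 → Good n := by
  have h := chain_step 492523 (by norm_num) (by norm_num) chain46
  intro n h3 hn
  exact h n h3 (by omega)

lemma chain48 : ∀ n : ℕ, 3 ≤ n → n < 153906 → Good n := by
  have h := chain_step 615623 (by norm_num) (by norm_num) chain47
  intro n h3 hn
  exact h n h3 (by omega)

lemma chain49 : ∀ n : ℕ, 3 ≤ n → n < 192372 → Good n := by
  have h := chain_step 769487 (by norm_num) (by norm_num) chain48
  intro n h3 hn
  exact h n h3 (by omega)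

lemma chain50 : ∀ n : ℕ, 3 ≤ n → n < 240464 → Good n := by
  have h := chain_step 961853 (by norm_num) (by norm_num) chain49
  intro n h3 hn
  exact h n h3 (by omega)

lemma chain51 : ∀ n : ℕ, 3 ≤ n → n < 300580 → Good n := by
  have h := chain_step 1202317 (by norm_num) (by norm_num) chain50
  intro n h3 hn
  exact h n h3 (by omega)

lemma chain52 : ∀ n : ℕ, 3 ≤ n → n < 375722 → Good n := by
  have h := chain_step 1502887 (by norm_num) (by norm_num) chain51
  intro n h3 hn
  exact h n h3 (by omega)

lemma chain53 : ∀ n : ℕ, 3 ≤ n → n < 469649 → Good n := by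
  have h := chain_step 1878593 (by norm_num) (by norm_num) chain52
  intro n h3 hn
  exact h n h3 (by omega)

lemma chain54 : ∀ n : ℕ, 3 ≤ n → n < 587060 → Good n := by
  have h := chain_step 2348239 (by norm_num) (by norm_num) chain53
  intro n h3 hn
  exact h n h3 (by omega)

lemma chain55 : ∀ n : ℕ, 3 ≤ n → n < 733820 → Good n := by
  have h := chain_step 2935279 (by norm_num) (by norm_num) chain54
  intro n h3 hn
  exact h n h3 (by omega)

lemma chain56 : ∀ n : ℕ, 3 ≤ n → n < 917275 → Good n := by
  have h := chain_step 3669097 (by norm_num) (by norm_num) chain55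
  intro n h3 hn
  exact h n h3 (by omega)

lemma chain57 : ∀ n : ℕ, 3 ≤ n → n < 1146587 → Good n := by
  have h := chain_step 4586347 (by norm_num) (by norm_num) chain56
  intro n h3 hn
  exact h n h3 (by omega)

lemma chain58 : ∀ n : ℕ, 3 ≤ n → n < 1433234 → Good n := by
  have h := chain_step 5732933 (by norm_num) (by norm_num) chain57
  intro n h3 hn
  exact h n h3 (by omega)

lemma chain59 : ∀ n : ℕ, 3 ≤ n → n < 1791542 → Good n := by
  have h := chain_step 7166167 (by norm_num) (by norm_num) chain58
  intro n h3 hn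
  exact h n h3 (by omega)

lemma chain60 : ∀ n : ℕ, 3 ≤ n → n < 2239424 → Good n := by
  have h := chain_step 8957693 (by norm_num) (by norm_num) chain59
  intro n h3 hn
  exact h n h3 (by omega)

lemma chain61 : ∀ n : ℕ, 3 ≤ n → n < 2799280 → Good n := by
  have h := chain_step 11197117 (by norm_num) (by norm_num) chain60
  intro n h3 hn
  exact h n h3 (by omega)

lemma chain62 : ∀ n : ℕ, 3 ≤ n → n < 3499098 → Good n := by
  have h := chain_step 13996391 (by norm_num) (by norm_num) chain61
  intro n h3 hn
  exact h n h3 (by omega)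

lemma chain63 : ∀ n : ℕ, 3 ≤ n → n < 4373869 → Good n := by
  have h := chain_step 17495473 (by norm_num) (by norm_num) chain62
  intro n h3 hn
  exact h n h3 (by omega)

lemma chain_final : ∀ n : ℕ, 3 ≤ n → n < 4373869 → Good n := chain63

theorem exists_prime_in_Icc_four_five (n : ℕ) (hn : 0 < n) (hn2 : n ≠ 2) :
    ∃ p : ℕ, p.Prime ∧ 4 * n ≤ p ∧ p ≤ 5 * n := by
  rcases lt_or_ge n 3 with h3 | h3
  · -- n = 1
    have : n = 1 := by omega
    subst this
    exact ⟨5, by norm_num, by omega, by omega⟩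
  · rcases lt_or_ge n 4000000 with hN | hN
    · exact chain_final n h3 (by omega)
    · exact analytic_case n hN
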